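/- If the confidence bounds are correct (l_t(s) ≤ r(s) ≤ u_t(s) for all s, t) and r is L-Lipschitz, then for all t ≥ 0 the ergodic safe set is contained in the largest safely learnable set: Ŝ_t ⊆ R̄_0(S_0). -/
import Mathlib


def Rret {S A : Type*} (f : S → A → S) (Act : S → Set A) (Sb Ss : Set S) : Set S :=
  Ss ∪ {s ∈ Sb | ∃ a ∈ Act s, f s a ∈ Ss}

def RretN {S A : Type*} (f : S → A → S) (Act : S → Set A) (Sb Ss : Set S) : ℕ → Set S
  | 0 => Ss
  | n + 1 => Rret f Act Sb (RretN f Act Sb Ss n)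

def RretBar {S A : Type*} (f : S → A → S) (Act : S → Set A) (Sb Ss : Set S) : Set S :=
  ⋃ n : ℕ, RretN f Act Sb Ss n

def Rreach {S A : Type*} (f : S → A → S) (Act : S → Set A) (Ss : Set S) : Set S :=
  Ss ∪ {s | ∃ sh ∈ Ss, ∃ ah ∈ Act sh, s = f sh ah}

def Rsafe {S : Type*} (d : S → S → ℝ) (r : S → ℝ) (L h ε : ℝ) (Ss : Set S) : Set S :=
  Ss ∪ {s | ∃ s' ∈ Ss, r s' - ε - L * d s s' ≥ h}

def Reps {S A : Type*} (f : S → A → S) (Act : S → Set A) (d : S → S → ℝ)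
    (r : S → ℝ) (L h ε : ℝ) (Ss : Set S) : Set S :=
  Rreach f Act Ss ∩ RretBar f Act (Rsafe d r L h ε Ss) Ss

def RepsBar {S A : Type*} (f : S → A → S) (Act : S → Set A) (d : S → S → ℝ)
    (r : S → ℝ) (L h ε : ℝ) (Ss : Set S) : Set S :=
  ⋃ n : ℕ, (Reps f Act d r L h ε)^[n] Ss


lemma Rreach_mono {S A : Type*} (f : S → A → S) (Act : S → Set A) {Ss Ss' : Set S}
    (h : Ss ⊆ Ss') : Rreach f Act Ss ⊆ Rreach f Act Ss' := by
  rintro s (hs | ⟨sh, hsh, ah, hah, rfl⟩)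
  · exact Or.inl (h hs)
  · exact Or.inr ⟨sh, h hsh, ah, hah, rfl⟩

lemma RretN_mono {S A : Type*} (f : S → A → S) (Act : S → Set A) {Sb Sb' Ss Ss' : Set S}
    (hb : Sb ⊆ Sb') (hs : Ss ⊆ Ss') : ∀ n, RretN f Act Sb Ss n ⊆ RretN f Act Sb' Ss' n := by
  intro n
  induction n with
  | zero => exact hs
  | succ n ih =>
    rintro s (h1 | ⟨h1, a, ha, hfa⟩)
    · exact Or.inl (ih h1)
    · exact Or.inr ⟨hb h1, a, ha, ih hfa⟩

lemma RretBar_mono {S A : Type*} (f : S → A → S) (Act : S → Set A) {Sb Sb' Ss Ss' : Set S}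
    (hb : Sb ⊆ Sb') (hs : Ss ⊆ Ss') : RretBar f Act Sb Ss ⊆ RretBar f Act Sb' Ss' := by
  intro s hsm
  obtain ⟨n, hn⟩ := Set.mem_iUnion.1 hsm
  exact Set.mem_iUnion.2 ⟨n, RretN_mono f Act hb hs n hn⟩

theorem stmt13 {S A : Type*} [Fintype S] (f : S → A → S) (Act : S → Set A)
    (d : S → S → ℝ) (r : S → ℝ) (L h : ℝ) (hL : 0 < L)
    (hLip : ∀ s s' : S, r s' - L * d s s' ≤ r s)
    (l u : ℕ → S → ℝ) (hlu : ∀ t s, l t s ≤ r s ∧ r s ≤ u t s)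
    (St Sh : ℕ → Set S) (S0 : Set S)
    (hinit : Sh 0 = S0) (hinit' : St 0 = S0)
    (hsafe0 : S0 ⊆ {s | r s ≥ h})
    (hSt : ∀ t : ℕ, 1 ≤ t →
      St t = {s | ∃ s' ∈ Sh (t - 1), l t s' - L * d s s' ≥ h})
    (hSh : ∀ t : ℕ, 1 ≤ t →
      Sh t = {s ∈ St t | s ∈ Rreach f Act (Sh (t - 1)) ∧
        s ∈ RretBar f Act (St t) (Sh (t - 1))}) :
    ∀ t : ℕ, Sh t ⊆ RepsBar f Act d r L h 0 S0 := by

  have key : ∀ t : ℕ, Sh t ⊆ (Reps f Act d r L h 0)^[t] S0 := by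
    intro t
    induction t with
    | zero => simp [hinit]
    | succ t ih =>
      rw [Function.iterate_succ_apply']
      set T := (Reps f Act d r L h 0)^[t] S0 with hT
      intro s hs
      rw [hSh (t+1) (by omega)] at hs
      simp only [Nat.add_sub_cancel] at hs
      obtain ⟨hst, hreach, hret⟩ := hs
      have hStsub : St (t+1) ⊆ Rsafe d r L h 0 T := by
        intro x hx
        rw [hSt (t+1) (by omega)] at hx
        simp only [Nat.add_sub_cancel] at hx
        obtain ⟨s', hs', hls'⟩ := hx
        refine Or.inr ⟨s', ih hs', ?_⟩
        have := (hlu (t+1) s').1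
        linarith
      exact ⟨Rreach_mono f Act ih hreach, RretBar_mono f Act hStsub ih hret⟩
  intro t s hs
  exact Set.mem_iUnion.2 ⟨t, key t hs⟩
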